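/- arXiv:1710.05283 — 3 statements merged into one kernel-verified Lean document; each statement's English description precedes it below -/
import Mathlib

section
/- Let g(·;θ₁,θ₂,ρ) be the bivariate exponential model pmf on {0,1}². For every B > 0 there exist δ, ε > 0 such that for all θ₁,θ₂,ϑ₁,ϑ₂ ∈ [-2B,2B] and ρ,ϱ ∈ [-B,B]: if |θ₁-ϑ₁| + |θ₂-ϑ₂| + |ρ-ϱ| > δ, then E_{Y∼g(·;θ₁,θ₂,ρ)}[log g(Y;θ₁,θ₂,ρ)] - E_{Y∼g(·;θ₁,θ₂,ρ)}[log g(Y;ϑ₁,ϑ₂,ϱ)] > ε. -/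
/-- The pmf of the bivariate exponential network model with interaction effect. -/
noncomputable def expPMF (a₁ a₂ θ₁ θ₂ ρ : ℝ) : ℝ :=
  Real.exp (θ₁ * a₁ + θ₂ * a₂ + ρ * a₁ * a₂) /
    (1 + Real.exp θ₁ + Real.exp θ₂ + Real.exp (θ₁ + θ₂ + ρ))

open Real

lemma Zpos (θ₁ θ₂ ρ : ℝ) : (0:ℝ) < 1 + exp θ₁ + exp θ₂ + exp (θ₁+θ₂+ρ) := by positivity

lemma expPMF_pos (a₁ a₂ θ₁ θ₂ ρ : ℝ) : 0 < expPMF a₁ a₂ θ₁ θ₂ ρ := by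
  unfold expPMF; positivity

lemma sum_expPMF (θ₁ θ₂ ρ : ℝ) : ∑ a : Fin 2 × Fin 2, expPMF (a.1 : ℝ) (a.2 : ℝ) θ₁ θ₂ ρ = 1 := by
  have hZ := Zpos θ₁ θ₂ ρ
  simp [Fintype.sum_prod_type, Fin.sum_univ_two, expPMF]
  field_simp
  ring

lemma log_expPMF (a₁ a₂ θ₁ θ₂ ρ : ℝ) :
    Real.log (expPMF a₁ a₂ θ₁ θ₂ ρ) =
      (θ₁ * a₁ + θ₂ * a₂ + ρ * a₁ * a₂) - Real.log (1 + exp θ₁ + exp θ₂ + exp (θ₁+θ₂+ρ)) := by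
  unfold expPMF
  rw [Real.log_div (exp_ne_zero _) (Zpos θ₁ θ₂ ρ).ne', Real.log_exp]

lemma term_ineq {p q : ℝ} (hp : 0 < p) (hq : 0 < q) :
    p - q ≤ p * Real.log p - p * Real.log q := by
  have h := Real.log_le_sub_one_of_pos (div_pos hq hp)
  rw [Real.log_div hq.ne' hp.ne'] at h
  have h2 := mul_le_mul_of_nonneg_left h hp.le
  have h3 : p * (q / p - 1) = q - p := by field_simp
  nlinarith

lemma term_lt {p q : ℝ} (hp : 0 < p) (hq : 0 < q) (hne : p ≠ q) :
    p - q < p * Real.log p - p * Real.log q := by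
  have h := Real.log_lt_sub_one_of_pos (div_pos hq hp) (by
    intro h; exact hne ((div_eq_one_iff_eq hp.ne').mp h).symm)
  rw [Real.log_div hq.ne' hp.ne'] at h
  have h2 := mul_lt_mul_of_pos_left h hp
  have h3 : p * (q / p - 1) = q - p := by field_simp
  nlinarith

lemma pmf_inj {θ₁ θ₂ ρ ϑ₁ ϑ₂ ϱ : ℝ}
    (h : ∀ a : Fin 2 × Fin 2, expPMF (a.1 : ℝ) (a.2 : ℝ) θ₁ θ₂ ρ = expPMF (a.1 : ℝ) (a.2 : ℝ) ϑ₁ ϑ₂ ϱ) :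
    θ₁ = ϑ₁ ∧ θ₂ = ϑ₂ ∧ ρ = ϱ := by
  have hZ := Zpos θ₁ θ₂ ρ
  have hZ' := Zpos ϑ₁ ϑ₂ ϱ
  have h00 := h ((0 : Fin 2), (0 : Fin 2))
  have h10 := h ((1 : Fin 2), (0 : Fin 2))
  have h01 := h ((0 : Fin 2), (1 : Fin 2))
  have h11 := h ((1 : Fin 2), (1 : Fin 2))
  simp only [expPMF, Fin.val_zero, Fin.val_one, Nat.cast_zero, Nat.cast_one,
    mul_zero, mul_one, zero_add, add_zero, mul_zero, Real.exp_zero] at h00 h10 h01 h11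
  have hZeq : (1 + exp θ₁ + exp θ₂ + exp (θ₁+θ₂+ρ)) = (1 + exp ϑ₁ + exp ϑ₂ + exp (ϑ₁+ϑ₂+ϱ)) := by
    field_simp at h00
    linarith
  rw [hZeq] at h10 h01 h11
  field_simp at h10 h01 h11
  rw [Real.exp_eq_exp] at h10 h01 h11
  exact ⟨h10, h01, by linarith⟩

lemma KL_pos {θ₁ θ₂ ρ ϑ₁ ϑ₂ ϱ : ℝ} (hne : ¬(θ₁ = ϑ₁ ∧ θ₂ = ϑ₂ ∧ ρ = ϱ)) :
    0 < (∑ a : Fin 2 × Fin 2,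
          expPMF (a.1 : ℝ) (a.2 : ℝ) θ₁ θ₂ ρ * Real.log (expPMF (a.1 : ℝ) (a.2 : ℝ) θ₁ θ₂ ρ)) -
        (∑ a : Fin 2 × Fin 2,
          expPMF (a.1 : ℝ) (a.2 : ℝ) θ₁ θ₂ ρ * Real.log (expPMF (a.1 : ℝ) (a.2 : ℝ) ϑ₁ ϑ₂ ϱ)) := by
  set p : Fin 2 × Fin 2 → ℝ := fun a => expPMF (a.1 : ℝ) (a.2 : ℝ) θ₁ θ₂ ρ with hp
  set q : Fin 2 × Fin 2 → ℝ := fun a => expPMF (a.1 : ℝ) (a.2 : ℝ) ϑ₁ ϑ₂ ϱ with hq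
  have hpq : ∃ a, p a ≠ q a := by
    by_contra hc
    push_neg at hc
    exact hne (pmf_inj hc)
  obtain ⟨a₀, ha₀⟩ := hpq
  have key : ∑ a : Fin 2 × Fin 2, (p a - q a) <
      ∑ a : Fin 2 × Fin 2, (p a * Real.log (p a) - p a * Real.log (q a)) := by
    apply Finset.sum_lt_sum
    · intro a _
      exact term_ineq (expPMF_pos _ _ _ _ _) (expPMF_pos _ _ _ _ _)
    · exact ⟨a₀, Finset.mem_univ _, term_lt (expPMF_pos _ _ _ _ _) (expPMF_pos _ _ _ _ _) ha₀⟩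
  have hsum : ∑ a : Fin 2 × Fin 2, (p a - q a) = 0 := by
    rw [Finset.sum_sub_distrib, sum_expPMF, sum_expPMF, sub_self]
  rw [hsum] at key
  rw [Finset.sum_sub_distrib] at key
  linarith

lemma contZ : Continuous fun v : ℝ×ℝ×ℝ => 1 + exp v.1 + exp v.2.1 + exp (v.1 + v.2.1 + v.2.2) := by
  fun_prop

lemma cont_expPMF (a₁ a₂ : ℝ) : Continuous fun v : ℝ×ℝ×ℝ => expPMF a₁ a₂ v.1 v.2.1 v.2.2 := by
  unfold expPMF
  exact Continuous.div (by fun_prop) contZ (fun v => (Zpos _ _ _).ne')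

lemma cont_log_expPMF (a₁ a₂ : ℝ) :
    Continuous fun v : ℝ×ℝ×ℝ => Real.log (expPMF a₁ a₂ v.1 v.2.1 v.2.2) := by
  simp only [log_expPMF]
  exact Continuous.sub (by fun_prop) (contZ.log (fun v => (Zpos _ _ _).ne'))

noncomputable def KLF (x : (ℝ×ℝ×ℝ) × (ℝ×ℝ×ℝ)) : ℝ :=
  ∑ a : Fin 2 × Fin 2,
    expPMF (a.1 : ℝ) (a.2 : ℝ) x.1.1 x.1.2.1 x.1.2.2 *
      (Real.log (expPMF (a.1 : ℝ) (a.2 : ℝ) x.1.1 x.1.2.1 x.1.2.2) -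
       Real.log (expPMF (a.1 : ℝ) (a.2 : ℝ) x.2.1 x.2.2.1 x.2.2.2))

lemma cont_KLF : Continuous KLF := by
  unfold KLF
  apply continuous_finset_sum
  intro a _
  exact ((cont_expPMF _ _).comp continuous_fst).mul
    (((cont_log_expPMF _ _).comp continuous_fst).sub
      ((cont_log_expPMF _ _).comp continuous_snd))

lemma KLF_eq (θ₁ θ₂ ρ ϑ₁ ϑ₂ ϱ : ℝ) :
    KLF ((θ₁, θ₂, ρ), (ϑ₁, ϑ₂, ϱ)) =
      (∑ a : Fin 2 × Fin 2,
        expPMF (a.1 : ℝ) (a.2 : ℝ) θ₁ θ₂ ρ * Real.log (expPMF (a.1 : ℝ) (a.2 : ℝ) θ₁ θ₂ ρ)) -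
      (∑ a : Fin 2 × Fin 2,
        expPMF (a.1 : ℝ) (a.2 : ℝ) θ₁ θ₂ ρ * Real.log (expPMF (a.1 : ℝ) (a.2 : ℝ) ϑ₁ ϑ₂ ϱ)) := by
  unfold KLF
  rw [← Finset.sum_sub_distrib]
  congr 1
  ext a
  ring

/-- Uniform separation: parameters that are `δ`-separated in `ℓ¹` distance have
KL divergence bounded below by `ε` over the compact parameter set. -/
theorem stmt_7 (B : ℝ) (hB : 0 < B) :
    ∃ δ ε : ℝ, 0 < δ ∧ 0 < ε ∧
      ∀ θ₁ θ₂ ϑ₁ ϑ₂ ρ ϱ : ℝ,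
        θ₁ ∈ Set.Icc (-2 * B) (2 * B) → θ₂ ∈ Set.Icc (-2 * B) (2 * B) →
        ϑ₁ ∈ Set.Icc (-2 * B) (2 * B) → ϑ₂ ∈ Set.Icc (-2 * B) (2 * B) →
        ρ ∈ Set.Icc (-B) B → ϱ ∈ Set.Icc (-B) B →
        δ < |θ₁ - ϑ₁| + |θ₂ - ϑ₂| + |ρ - ϱ| →
        ε < (∑ a : Fin 2 × Fin 2,
              expPMF (a.1 : ℝ) (a.2 : ℝ) θ₁ θ₂ ρ *
                Real.log (expPMF (a.1 : ℝ) (a.2 : ℝ) θ₁ θ₂ ρ)) -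
            (∑ a : Fin 2 × Fin 2,
              expPMF (a.1 : ℝ) (a.2 : ℝ) θ₁ θ₂ ρ *
                Real.log (expPMF (a.1 : ℝ) (a.2 : ℝ) ϑ₁ ϑ₂ ϱ)) := by
  classical
  set box : Set (ℝ×ℝ×ℝ) :=
    (Set.Icc (-2*B) (2*B)) ×ˢ (Set.Icc (-2*B) (2*B)) ×ˢ (Set.Icc (-B) B) with hbox
  have hboxc : IsCompact box := (isCompact_Icc.prod (isCompact_Icc.prod isCompact_Icc))
  set dsum : (ℝ×ℝ×ℝ) × (ℝ×ℝ×ℝ) → ℝ :=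
    fun x => |x.1.1 - x.2.1| + |x.1.2.1 - x.2.2.1| + |x.1.2.2 - x.2.2.2| with hdsum
  have hcontd : Continuous dsum := by
    apply Continuous.add
    apply Continuous.add
    · exact (continuous_fst.fst.sub continuous_snd.fst).abs
    · exact (continuous_fst.snd.fst.sub continuous_snd.snd.fst).abs
    · exact (continuous_fst.snd.snd.sub continuous_snd.snd.snd).abs
  set S : Set ((ℝ×ℝ×ℝ) × (ℝ×ℝ×ℝ)) := (box ×ˢ box) ∩ {x | B ≤ dsum x} with hSdef
  have hSc : IsCompact S :=
    (hboxc.prod hboxc).inter_right (isClosed_le continuous_const hcontd)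
  have hSne : S.Nonempty := by
    have hA : (2*B : ℝ) ∈ Set.Icc (-2*B) (2*B) := Set.mem_Icc.mpr ⟨by linarith, le_refl _⟩
    have hA' : (-(2*B) : ℝ) ∈ Set.Icc (-2*B) (2*B) := Set.mem_Icc.mpr ⟨by linarith, by linarith⟩
    have h0 : (0 : ℝ) ∈ Set.Icc (-2*B) (2*B) := Set.mem_Icc.mpr ⟨by linarith, by linarith⟩
    have h0' : (0 : ℝ) ∈ Set.Icc (-B) B := Set.mem_Icc.mpr ⟨by linarith, by linarith⟩
    refine ⟨((2*B, 0, 0), (-(2*B), 0, 0)), ⟨⟨⟨hA, h0, h0'⟩, ⟨hA', h0, h0'⟩⟩, ?_⟩⟩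
    · show B ≤ dsum ((2*B, 0, 0), (-(2*B), 0, 0))
      have : dsum ((2*B, 0, 0), (-(2*B), 0, 0)) = 4*B := by
        simp only [hdsum]
        rw [show (2*B : ℝ) - -(2*B) = 4*B by ring, sub_zero, abs_zero,
          abs_of_pos (by linarith : (0:ℝ) < 4*B)]
        ring
      rw [this]; linarith
  obtain ⟨x₀, hx₀S, hmin⟩ := hSc.exists_isMinOn hSne cont_KLF.continuousOn
  have hx₀pos : 0 < KLF x₀ := by
    obtain ⟨⟨a1, a2, a3⟩, ⟨b1, b2, b3⟩⟩ := x₀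
    obtain ⟨-, hd⟩ := hx₀S
    rw [KLF_eq]
    apply KL_pos
    rintro ⟨h1, h2, h3⟩
    have : dsum ((a1, a2, a3), (b1, b2, b3)) = 0 := by
      simp only [hdsum, h1, h2, h3, sub_self, abs_zero, add_zero]
    have hd' : B ≤ dsum ((a1, a2, a3), (b1, b2, b3)) := hd
    rw [this] at hd'
    linarith
  refine ⟨B, KLF x₀ / 2, hB, by linarith, ?_⟩
  intro θ₁ θ₂ ϑ₁ ϑ₂ ρ ϱ h1 h2 h3 h4 h5 h6 hd
  have hxS : ((θ₁, θ₂, ρ), (ϑ₁, ϑ₂, ϱ)) ∈ S :=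
    ⟨⟨⟨h1, h2, h5⟩, ⟨h3, h4, h6⟩⟩, le_of_lt hd⟩
  have hle : KLF x₀ ≤ KLF ((θ₁, θ₂, ρ), (ϑ₁, ϑ₂, ϱ)) := isMinOn_iff.mp hmin _ hxS
  rw [← KLF_eq θ₁ θ₂ ρ ϑ₁ ϑ₂ ϱ]
  exact lt_of_lt_of_le (by linarith) hle
end

section
/- Let (Y_{ij})_{i<j≤n} be independent Bernoulli random variables with P(Y_{ij} = 1) ≤ p for all i < j. Fix M ⊆ {1,...,n} with |M| = k ≥ 2, let Z = Σ_{i<j∈M} Y_{ij}, and let u > 0 with w := 2u/(k(k-1)) satisfying w ≤ 1/4 and w ≥ e³·p. Then P(Z ≥ u) ≤ exp(-2u). -/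
open MeasureTheory ProbabilityTheory Real

/-- Chernoff-type bound for the number of edges inside a vertex subset of a sparse
random graph. -/
theorem stmt_11
    (Ω : Type) (mΩ : MeasurableSpace Ω) (μ : Measure Ω) [IsProbabilityMeasure μ]
    (n : ℕ) (Y : Fin n × Fin n → Ω → ℝ) (q : ℝ)
    (hmeas : ∀ p, Measurable (Y p))
    (hindep : iIndepFun Y μ)
    (h01 : ∀ p ω, Y p ω = 0 ∨ Y p ω = 1)
    (hq : ∀ p, (μ {ω | Y p ω = 1}).toReal ≤ q)
    (M : Finset (Fin n)) (k : ℕ) (hk : M.card = k) (hk2 : 2 ≤ k)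
    (u : ℝ) (hu : 0 < u)
    (hw4 : 2 * u / ((k : ℝ) * ((k : ℝ) - 1)) ≤ 1 / 4)
    (hwq : Real.exp 3 * q ≤ 2 * u / ((k : ℝ) * ((k : ℝ) - 1))) :
    (μ {ω | u ≤ ∑ p ∈ (M ×ˢ M).filter (fun p => p.1 < p.2), Y p ω}).toReal ≤
      Real.exp (-2 * u) := by
  classical
  set S : Finset (Fin n × Fin n) := (M ×ˢ M).filter (fun p => p.1 < p.2) with hS
  set N : ℕ := S.card with hN
  set w : ℝ := 2 * u / ((k : ℝ) * ((k : ℝ) - 1)) with hw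
  have hk1 : (1:ℝ) ≤ (k:ℝ) - 1 := by
    have : (2:ℝ) ≤ (k:ℝ) := by exact_mod_cast hk2
    linarith
  have hkpos : 0 < (k : ℝ) * ((k:ℝ) - 1) := by nlinarith
  have hwpos : 0 < w := div_pos (by linarith) hkpos
  -- cardinality bound : 2 * N ≤ k * k - k
  have hcard2 : 2 * (N:ℝ) ≤ (k:ℝ) * ((k:ℝ) - 1) := by
    set S' : Finset (Fin n × Fin n) := (M ×ˢ M).filter (fun p => p.2 < p.1) with hS'
    have hbij : S.card = S'.card := by
      apply Finset.card_bij (fun p _ => Prod.swap p)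
      · intro a ha
        simp only [hS, hS', Finset.mem_filter, Finset.mem_product] at ha ⊢
        exact ⟨⟨ha.1.2, ha.1.1⟩, ha.2⟩
      · intro a ha b hb hab
        exact Prod.swap_injective hab
      · intro b hb
        refine ⟨Prod.swap b, ?_, by simp⟩
        simp only [hS, hS', Finset.mem_filter, Finset.mem_product] at hb ⊢
        exact ⟨⟨hb.1.2, hb.1.1⟩, hb.2⟩
    have hdisj : Disjoint S S' := by
      rw [Finset.disjoint_left]
      intro p hp hp'
      simp only [hS, hS', Finset.mem_filter] at hp hp'
      exact absurd hp'.2 (lt_asymm hp.2)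
    have hsub : S ∪ S' ⊆ M.offDiag := by
      intro p hp
      rcases Finset.mem_union.1 hp with h | h <;>
        simp only [hS, hS', Finset.mem_filter, Finset.mem_product] at h <;>
        rw [Finset.mem_offDiag]
      · exact ⟨h.1.1, h.1.2, ne_of_lt h.2⟩
      · exact ⟨h.1.1, h.1.2, (ne_of_lt h.2).symm⟩
    have hnat : 2 * N ≤ k * k - k := by
      have := Finset.card_le_card hsub
      rw [Finset.card_union_of_disjoint hdisj, Finset.offDiag_card, hk] at this
      omega
    have hkk : k ≤ k * k := Nat.le_mul_of_pos_left k (by omega)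
    have : (2 * N : ℝ) ≤ ((k*k - k : ℕ) : ℝ) := by exact_mod_cast hnat
    rw [Nat.cast_sub hkk] at this
    push_cast at this ⊢
    nlinarith
  have hNw : (N:ℝ) * w ≤ u := by
    have hkey : (N:ℝ) * w * ((k:ℝ) * ((k:ℝ) - 1)) = 2 * (N:ℝ) * u := by
      rw [hw]; field_simp
    nlinarith [mul_nonneg hu.le (sub_nonneg.2 hcard2), hkpos]
  -- integrability and expectation facts
  have hYint : ∀ p, Integrable (Y p) μ := fun p =>
    (integrable_const (1:ℝ)).mono' (hmeas p).aestronglyMeasurable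
      (Filter.Eventually.of_forall fun ω => by rcases h01 p ω with h|h <;> simp [h])
  have hEY0 : ∀ p, 0 ≤ ∫ ω, Y p ω ∂μ := fun p =>
    integral_nonneg fun ω => by rcases h01 p ω with h|h <;> simp [h]
  set q' : ℝ := max q 0 with hq'
  have hEYq : ∀ p, ∫ ω, Y p ω ∂μ ≤ q' := by
    intro p
    have hind : Y p = Set.indicator {ω | Y p ω = 1} (fun _ => (1:ℝ)) := by
      funext ω
      rcases h01 p ω with h|h
      · rw [Set.indicator_of_notMem (by simp [Set.mem_setOf_eq, h]), h]
      · rw [Set.indicator_of_mem (by simp [Set.mem_setOf_eq, h]), h]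
    have hms : MeasurableSet {ω | Y p ω = 1} := hmeas p (measurableSet_singleton 1)
    calc ∫ ω, Y p ω ∂μ = (μ {ω | Y p ω = 1}).toReal := by
          rw [hind, integral_indicator_const _ hms]; simp; rfl
      _ ≤ q := hq p
      _ ≤ q' := le_max_left _ _
  -- mgf of each Y p
  have hmgf : ∀ (t : ℝ) p, mgf (Y p) μ t = 1 + (Real.exp t - 1) * ∫ ω, Y p ω ∂μ := by
    intro t p
    have heq : (fun ω => Real.exp (t * Y p ω)) = fun ω => 1 + (Real.exp t - 1) * Y p ω := by
      funext ω
      rcases h01 p ω with h|h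
      · simp [h]
      · rw [h]; simp
    rw [mgf, heq, integral_add (integrable_const 1) ((hYint p).const_mul _),
      integral_const, integral_const_mul]
    simp
  -- choice of t and arithmetic
  obtain ⟨t, ht0, harith⟩ :
      ∃ t : ℝ, 0 ≤ t ∧ (N:ℝ) * ((Real.exp t - 1) * q') + -t * u ≤ -2 * u := by
    by_cases hq0 : q ≤ 0
    · refine ⟨2, by norm_num, ?_⟩
      rw [hq', max_eq_right hq0]
      ring_nf
      nlinarith
    · push_neg at hq0
      refine ⟨Real.log (w / q), ?_, ?_⟩
      · have : (1:ℝ) ≤ w / q := by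
          rw [le_div_iff₀ hq0]
          nlinarith [Real.add_one_le_exp (3:ℝ), Real.exp_pos (3:ℝ)]
        exact Real.log_nonneg this
      · have hwq' : Real.exp 3 * q ≤ w := hwq
        have hdivge : Real.exp 3 ≤ w / q := (le_div_iff₀ hq0).2 (by linarith)
        have ht3 : (3:ℝ) ≤ Real.log (w / q) := by
          calc (3:ℝ) = Real.log (Real.exp 3) := (Real.log_exp 3).symm
            _ ≤ Real.log (w / q) := Real.log_le_log (Real.exp_pos 3) hdivge
        have hexplog : Real.exp (Real.log (w / q)) = w / q :=
          Real.exp_log (div_pos hwpos hq0)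
        rw [hq', max_eq_left hq0.le, hexplog]
        have h1 : (N:ℝ) * ((w / q - 1) * q) ≤ (N:ℝ) * w := by
          have : (w / q - 1) * q = w - q := by field_simp
          rw [this]
          have : (0:ℝ) ≤ (N:ℝ) := Nat.cast_nonneg N
          nlinarith
        nlinarith
  -- mgf bound for each p
  have hc0 : 0 ≤ (Real.exp t - 1) * q' := by
    have h1 : (1:ℝ) ≤ Real.exp t := by
      calc (1:ℝ) = Real.exp 0 := (Real.exp_zero).symm
        _ ≤ Real.exp t := Real.exp_le_exp.2 ht0
    have : (0:ℝ) ≤ q' := le_max_right _ _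
    nlinarith
  have hmgfle : ∀ p, mgf (Y p) μ t ≤ Real.exp ((Real.exp t - 1) * q') := by
    intro p
    rw [hmgf t p]
    have h1 : (1:ℝ) ≤ Real.exp t := by
      calc (1:ℝ) = Real.exp 0 := (Real.exp_zero).symm
        _ ≤ Real.exp t := Real.exp_le_exp.2 ht0
    calc 1 + (Real.exp t - 1) * ∫ ω, Y p ω ∂μ
        ≤ 1 + (Real.exp t - 1) * q' := by nlinarith [hEYq p, hEY0 p]
      _ ≤ Real.exp ((Real.exp t - 1) * q') := by
          have := Real.add_one_le_exp ((Real.exp t - 1) * q')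
          linarith
  -- Chernoff
  set Z : Ω → ℝ := fun ω => ∑ p ∈ S, Y p ω with hZ
  have hZmeas : Measurable Z := Finset.measurable_sum S fun p _ => hmeas p
  have hZbd : ∀ ω, Z ω ≤ (N:ℝ) := by
    intro ω
    calc Z ω ≤ ∑ _p ∈ S, (1:ℝ) := Finset.sum_le_sum fun p _ => by
          rcases h01 p ω with h|h <;> simp [h]
      _ = (N:ℝ) := by simp [hN]
  have hZ0 : ∀ ω, 0 ≤ Z ω :=
    fun ω => Finset.sum_nonneg fun p _ => by rcases h01 p ω with h|h <;> simp [h]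
  have hint : Integrable (fun ω => Real.exp (t * Z ω)) μ := by
    refine (integrable_const (Real.exp (t * N))).mono'
      ((hZmeas.const_mul t).exp).aestronglyMeasurable
      (Filter.Eventually.of_forall fun ω => ?_)
    rw [Real.norm_eq_abs, abs_of_pos (Real.exp_pos _)]
    exact Real.exp_le_exp.2 (mul_le_mul_of_nonneg_left (hZbd ω) ht0)
  have hsumeq : Z = ∑ p ∈ S, Y p := by funext ω; simp [hZ, Finset.sum_apply]
  have hchern : (μ {ω | u ≤ Z ω}).toReal ≤ Real.exp (-t * u) * mgf Z μ t :=
    measure_ge_le_exp_mul_mgf u ht0 hint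
  have hmgfprod : mgf Z μ t = ∏ p ∈ S, mgf (Y p) μ t := by
    rw [hsumeq]; exact hindep.mgf_sum hmeas S
  have hprodle : ∏ p ∈ S, mgf (Y p) μ t ≤ Real.exp ((N:ℝ) * ((Real.exp t - 1) * q')) := by
    calc ∏ p ∈ S, mgf (Y p) μ t
        ≤ ∏ _p ∈ S, Real.exp ((Real.exp t - 1) * q') :=
          Finset.prod_le_prod (fun p _ => mgf_nonneg) (fun p _ => hmgfle p)
      _ = Real.exp ((Real.exp t - 1) * q') ^ N := by rw [Finset.prod_const, hN]
      _ = Real.exp ((N:ℝ) * ((Real.exp t - 1) * q')) := by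
          rw [← Real.exp_nat_mul]
  calc (μ {ω | u ≤ ∑ p ∈ S, Y p ω}).toReal
      = (μ {ω | u ≤ Z ω}).toReal := rfl
    _ ≤ Real.exp (-t * u) * mgf Z μ t := hchern
    _ ≤ Real.exp (-t * u) * Real.exp ((N:ℝ) * ((Real.exp t - 1) * q')) := by
        rw [hmgfprod]
        exact mul_le_mul_of_nonneg_left hprodle (Real.exp_pos _).le
    _ = Real.exp ((N:ℝ) * ((Real.exp t - 1) * q') + -t * u) := by
        rw [← Real.exp_add]; ring_nf
    _ ≤ Real.exp (-2 * u) := Real.exp_le_exp.2 harith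
end

section
/- For any w ∈ (0, 1/4] and p ∈ (0, 1) with e³·p ≤ w, it holds that -w·log w - (1-w)·log(1-w) + w·log p + (1-w)·log(1-p) ≤ -2w. -/
/-- Entropy inequality used in Lemma 6: minus the relative entropy of `Bernoulli w`
with respect to `Bernoulli p` is at most `-2w` when `e³ p ≤ w ≤ 1/4`. -/
theorem stmt_12 (w p : ℝ) (hw0 : 0 < w) (hw : w ≤ 1 / 4)
    (hp0 : 0 < p) (hp1 : p < 1) (hpw : Real.exp 3 * p ≤ w) :
    -w * Real.log w - (1 - w) * Real.log (1 - w)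
        + w * Real.log p + (1 - w) * Real.log (1 - p) ≤ -2 * w := by
  have hw1 : w < 1 := by linarith
  have h1w : (0:ℝ) < 1 - w := by linarith
  have h1p : (0:ℝ) < 1 - p := by linarith
  -- First part: w * (log p - log w) ≤ -3w
  have hlog1 : Real.log p + 3 ≤ Real.log w := by
    have h := Real.log_le_log (mul_pos (Real.exp_pos 3) hp0) hpw
    rw [Real.log_mul (ne_of_gt (Real.exp_pos 3)) (ne_of_gt hp0), Real.log_exp] at h
    linarith
  have hA : w * Real.log p - w * Real.log w ≤ -3 * w := by nlinarith
  -- Second part: (1-w) * (log(1-p) - log(1-w)) ≤ w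
  have hlogp : Real.log (1 - p) ≤ 0 := Real.log_nonpos (by linarith) (by linarith)
  have hlog2 : Real.log (1 - w)⁻¹ ≤ (1 - w)⁻¹ - 1 :=
    Real.log_le_sub_one_of_pos (inv_pos.mpr h1w)
  rw [Real.log_inv] at hlog2
  have hB : (1 - w) * Real.log (1 - p) - (1 - w) * Real.log (1 - w) ≤ w := by
    have h1 : (1 - w) * (-Real.log (1 - w)) ≤ (1 - w) * ((1 - w)⁻¹ - 1) := by
      apply mul_le_mul_of_nonneg_left hlog2 (le_of_lt h1w)
    have h2 : (1 - w) * ((1 - w)⁻¹ - 1) = w := by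
      field_simp
      ring
    nlinarith [mul_nonpos_of_nonneg_of_nonpos (le_of_lt h1w) hlogp]
  linarith
end
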